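/- Let F be a linearly ordered field with integer part I, let n be a positive natural number, and let α_1, …, α_n ∈ F all be rational with α_i > 1 for each i. Then the intersection ⋂_{i=1}^n N_{α_i} and the complement I^{≥0} \ ⋃_{i=1}^n N_{α_i} are both cofinal subsets of I. -/

import Mathlib

/-- `N_α`: the set `{⌊n·α⌋ : n ∈ I, n ≥ 0}`, where `fl` is the floor function
associated to the integer part `I` of `F`. -/
def Nset {F : Type*} [Field F] [LinearOrder F] [IsStrictOrderedRing F] (I : Subring F) (fl : F → F) (α : F) : Set F :=
  {y | ∃ n, n ∈ I ∧ 0 ≤ n ∧ y = fl (n * α)}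

/-- `I^{≥0}`: the nonnegative elements of `I`. -/
def Inonneg {F : Type*} [Field F] [LinearOrder F] [IsStrictOrderedRing F] (I : Subring F) : Set F :=
  {n | n ∈ I ∧ 0 ≤ n}

/-- An element of `F` is rational (with respect to `I`) if it lies in the
fraction field of `I` viewed inside `F`. -/
def IsRat {F : Type*} [Field F] [LinearOrder F] [IsStrictOrderedRing F] (I : Subring F) (α : F) : Prop :=
  ∃ p ∈ I, ∃ q ∈ I, q ≠ 0 ∧ α = p / q

theorem stmt_2 {F : Type*} [Field F] [LinearOrder F] [IsStrictOrderedRing F] (I : Subring F) (fl : F → F)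
    (hdisc : ∀ x ∈ I, ¬(0 < x ∧ x < 1))
    (hfl : ∀ x : F, fl x ∈ I ∧ fl x ≤ x ∧ x < fl x + 1)
    (n : ℕ) (hn : 0 < n) (α : Fin n → F)
    (hrat : ∀ i, IsRat I (α i)) (hgt : ∀ i, 1 < α i) :
    (∀ x ∈ I, ∃ s ∈ ⋂ i, Nset I fl (α i), x ≤ s) ∧
    (∀ x ∈ I, ∃ s ∈ Inonneg I \ ⋃ i, Nset I fl (α i), x ≤ s) := by
  classical
  -- discreteness: a < b in I implies a + 1 ≤ b
  have hstep : ∀ a ∈ I, ∀ b ∈ I, a < b → a + 1 ≤ b := by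
    intro a ha b hb hab
    by_contra h
    push_neg at h
    exact hdisc (b - a) (I.sub_mem hb ha) ⟨by linarith, by linarith⟩
  -- the floor fixes elements of I
  have hflI : ∀ x ∈ I, fl x = x := by
    intro x hx
    obtain ⟨h1, h2, h3⟩ := hfl x
    by_contra hne
    have hlt : fl x < x := lt_of_le_of_ne h2 hne
    have := hstep _ h1 _ hx hlt
    linarith
  -- normalize the rational representations
  have hrat' : ∀ i, ∃ p, p ∈ I ∧ ∃ q, q ∈ I ∧ 0 < q ∧ q < p ∧ α i = p / q := by
    intro i
    obtain ⟨p, hp, q, hq, hq0, he⟩ := hrat i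
    have hpq : p = (p / q) * q := (div_mul_cancel₀ p hq0).symm
    rcases hq0.lt_or_gt with h | h
    · refine ⟨-p, I.neg_mem hp, -q, I.neg_mem hq, by linarith, ?_, by
        rw [neg_div_neg_eq]; exact he⟩
      have h1 : 1 < p / q := he ▸ hgt i
      have : (p / q) * q < 1 * q := mul_lt_mul_of_neg_right h1 h
      rw [← hpq, one_mul] at this
      linarith
    · refine ⟨p, hp, q, hq, h, ?_, he⟩
      have h1 : 1 < p / q := he ▸ hgt i
      have : 1 * q < (p / q) * q := mul_lt_mul_of_pos_right h1 h
      rw [← hpq, one_mul] at this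
      linarith
  choose p hpI q hqI hq0 hqp hα using hrat'
  have hq1 : ∀ i, (1 : F) ≤ q i := by
    intro i
    have := hstep 0 I.zero_mem (q i) (hqI i) (hq0 i)
    linarith
  have hp1 : ∀ i, (1 : F) ≤ p i := fun i => le_trans (hq1 i) (le_of_lt (hqp i))
  set P : F := ∏ i, p i with hPdef
  have hPI : P ∈ I := Subring.prod_mem I (fun i _ => hpI i)
  have hP1 : (1 : F) ≤ P := by
    have h := Finset.prod_le_prod (s := Finset.univ) (f := fun _ : Fin n => (1 : F)) (g := p)
      (fun i _ => zero_le_one) (fun i _ => hp1 i)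
    simpa using h
  -- complementary products
  have hQex : ∀ i, ∃ Q, Q ∈ I ∧ 0 ≤ Q ∧ P = p i * Q := by
    intro i
    refine ⟨∏ j ∈ Finset.univ.erase i, p j,
      Subring.prod_mem I (fun j _ => hpI j), ?_, ?_⟩
    · exact Finset.prod_nonneg (fun j _ => by linarith [hp1 j])
    · exact (Finset.mul_prod_erase Finset.univ p (Finset.mem_univ i)).symm
  choose Q hQI hQ0 hPQ using hQex
  constructor
  · -- the intersection is cofinal
    intro x hx
    have hmax : max x 0 ∈ I := by
      rcases max_choice x 0 with h | h <;> rw [h]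
      · exact hx
      · exact I.zero_mem
    have hmax0 : (0 : F) ≤ max x 0 := le_max_right x 0
    refine ⟨max x 0 * P, ?_, ?_⟩
    · rw [Set.mem_iInter]
      intro i
      refine ⟨max x 0 * Q i * q i,
        I.mul_mem (I.mul_mem hmax (hQI i)) (hqI i),
        mul_nonneg (mul_nonneg hmax0 (hQ0 i)) (hq0 i).le, ?_⟩
      have key : max x 0 * Q i * q i * α i = max x 0 * P := by
        have hqne : q i ≠ 0 := (hq0 i).ne'
        rw [hα i, hPQ i]
        field_simp
      rw [key, hflI _ (I.mul_mem hmax hPI)]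
    · calc x ≤ max x 0 := le_max_left x 0
        _ ≤ max x 0 * P := le_mul_of_one_le_right hmax0 hP1
  · -- the complement is cofinal
    intro x hx
    have hmax : max x 0 ∈ I := by
      rcases max_choice x 0 with h | h <;> rw [h]
      · exact hx
      · exact I.zero_mem
    set k : F := max x 0 + 1 with hkdef
    have hkI : k ∈ I := I.add_mem hmax I.one_mem
    have hk1 : (1 : F) ≤ k := by
      have := le_max_right x 0; simp only [hkdef]; linarith
    have hkP : k ≤ k * P := le_mul_of_one_le_right (by linarith) hP1
    set s : F := k * P - 1 with hsdef
    have hsI : s ∈ I := I.sub_mem (I.mul_mem hkI hPI) I.one_mem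
    refine ⟨s, ⟨⟨hsI, by simp only [hsdef]; linarith⟩, ?_⟩, ?_⟩
    · intro hmem
      rw [Set.mem_iUnion] at hmem
      obtain ⟨i, m, hmI, hm0, hms⟩ := hmem
      obtain ⟨h1, h2, h3⟩ := hfl (m * α i)
      rw [← hms] at h2 h3
      rw [hα i, ← mul_div_assoc] at h2 h3
      have hqpos := hq0 i
      have hpi : (0 : F) < p i := lt_of_lt_of_le zero_lt_one (hp1 i)
      have e1 : s * q i ≤ m * p i := (le_div_iff₀ hqpos).mp h2
      have e2 : m * p i < (s + 1) * q i := (div_lt_iff₀ hqpos).mp h3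
      set c : F := k * Q i * q i with hcdef
      have hcI : c ∈ I := I.mul_mem (I.mul_mem hkI (hQI i)) (hqI i)
      have hcp : c * p i = s * q i + q i := by
        simp only [hcdef, hsdef, hPQ i]; ring
      have hmc : m < c := by
        have h' : m * p i < c * p i := by rw [hcp]; linarith
        exact lt_of_mul_lt_mul_right h' hpi.le
      have hm1 : m + 1 ≤ c := hstep m hmI c hcI hmc
      have h4 : m * p i ≤ (c - 1) * p i :=
        mul_le_mul_of_nonneg_right (by linarith) hpi.le
      have h5 : (c - 1) * p i = c * p i - p i := by ring
      have := hqp i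
      linarith [hcp]
    · have := le_max_left x 0
      simp only [hsdef]
      linarith
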